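/- Let X be a semi-proper scheme (the canonical morphism X → Spec Γ(X, O_X) is proper) and let W → X be a closed immersion of schemes. Then W is semi-proper; that is, the canonical morphism W → Spec Γ(W, O_W) is proper. (This is Lemma 4.2(b) of the paper.) -/

import Mathlib

open AlgebraicGeometry CategoryTheory Limits

universe u

lemma isProper_of_comp {X Y Z : Scheme.{u}} (f : X ⟶ Y) (g : Y ⟶ Z)
    [IsProper (f ≫ g)] [IsSeparated g] : IsProper f := by
  rw [← pullback.lift_snd (𝟙 _) f (Category.id_comp (f ≫ g))]
  have h2 : IsProper (pullback.snd (f ≫ g) g) := inferInstance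
  have h1 : IsClosedImmersion (pullback.lift (𝟙 X) f (Category.id_comp (f ≫ g))) :=
    inferInstance
  exact MorphismProperty.IsStableUnderComposition.comp_mem _ _ inferInstance h2

/-- Lemma 4.2(b): if `X` is a semi-proper scheme (the canonical morphism
`X ⟶ Spec Γ(X, O_X)` is proper) and `W ⟶ X` is a closed immersion, then `W` is
semi-proper: the canonical morphism `W ⟶ Spec Γ(W, O_W)` is proper. -/
theorem stmt7 {X W : Scheme.{u}} (hX : IsProper X.toSpecΓ)
    (f : W ⟶ X) [IsClosedImmersion f] :
    IsProper W.toSpecΓ := by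
  have h : IsProper (W.toSpecΓ ≫ Spec.map f.appTop) := by
    rw [← Scheme.toSpecΓ_naturality]
    exact MorphismProperty.IsStableUnderComposition.comp_mem _ _ inferInstance hX
  exact isProper_of_comp W.toSpecΓ (Spec.map f.appTop)
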